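/- Let f be continuous on [a,x], let α, β > 0. Then applying the Riemann–Liouville fractional integral of order β to the Riemann–Liouville fractional integral of order α of f yields the Riemann–Liouville fractional integral of order α + β: (1/Γ(β)) ∫_a^x (x-s)^{β-1} [ (1/Γ(α)) ∫_a^s (s-t)^{α-1} f(t) dt ] ds = (1/Γ(α+β)) ∫_a^x (x-t)^{α+β-1} f(t) dt. -/

import Mathlib

open intervalIntegral Real

lemma real_beta (α β : ℝ) (hα : 0 < α) (hβ : 0 < β) :
    ∫ u in (0:ℝ)..1, u ^ (α - 1) * (1 - u) ^ (β - 1)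
      = Real.Gamma α * Real.Gamma β / Real.Gamma (α + β) := by
  have h := Complex.Gamma_mul_Gamma_eq_betaIntegral
    (s := (α:ℂ)) (t := (β:ℂ)) (by simpa using hα) (by simpa using hβ)
  have hbeta : Complex.betaIntegral α β
      = ((∫ u in (0:ℝ)..1, u ^ (α - 1) * (1 - u) ^ (β - 1) : ℝ) : ℂ) := by
    rw [Complex.betaIntegral, ← intervalIntegral.integral_ofReal]
    refine intervalIntegral.integral_congr fun u hu => ?_
    rw [Set.uIcc_of_le zero_le_one] at hu
    rw [Complex.ofReal_mul, Complex.ofReal_cpow hu.1, Complex.ofReal_cpow (by linarith [hu.2] : (0:ℝ) ≤ 1 - u)]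
    push_cast
    ring
  rw [hbeta, ← Complex.ofReal_add, Complex.Gamma_ofReal, Complex.Gamma_ofReal,
    Complex.Gamma_ofReal, ← Complex.ofReal_mul, ← Complex.ofReal_mul] at h
  have hne : Real.Gamma (α + β) ≠ 0 := (Real.Gamma_pos_of_pos (by linarith)).ne'
  have := Complex.ofReal_inj.mp h
  field_simp
  linarith [this]

open MeasureTheory Set



lemma inner_kernel (α β t x : ℝ) (hα : 0 < α) (hβ : 0 < β) (htx : t < x) :
    ∫ s in t..x, (x - s) ^ (β - 1) * (s - t) ^ (α - 1)
      = (x - t) ^ (α + β - 1) * ∫ u in (0:ℝ)..1, u ^ (α - 1) * (1 - u) ^ (β - 1) := by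
  have hc0 : 0 < x - t := by linarith
  have key := intervalIntegral.integral_comp_mul_add
    (a := (0:ℝ)) (b := 1) (f := fun s => (x - s) ^ (β - 1) * (s - t) ^ (α - 1))
    (hc := hc0.ne') (d := t)
  simp only [mul_zero, zero_add, mul_one] at key
  have h2 : (x - t) + t = x := by ring
  rw [h2] at key
  have congr1 : ∫ u in (0:ℝ)..1, (x - ((x - t) * u + t)) ^ (β - 1) * ((x - t) * u + t - t) ^ (α - 1)
      = ∫ u in (0:ℝ)..1, ((x-t) ^ (α - 1) * (x-t) ^ (β-1)) * (u ^ (α - 1) * (1 - u) ^ (β - 1)) := by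
    refine intervalIntegral.integral_congr fun u hu => ?_
    rw [Set.uIcc_of_le zero_le_one] at hu
    have e1 : x - ((x - t) * u + t) = (x - t) * (1 - u) := by ring
    have e2 : (x - t) * u + t - t = (x - t) * u := by ring
    rw [e1, e2, Real.mul_rpow (by linarith) (by linarith [hu.2]),
      Real.mul_rpow (by linarith) hu.1]
    ring
  rw [congr1, intervalIntegral.integral_const_mul, eq_comm,
    inv_smul_eq_iff₀ hc0.ne'] at key
  rw [key, smul_eq_mul]
  have hpow : (x - t) * ((x - t) ^ (α - 1) * (x - t) ^ (β - 1)) = (x - t) ^ (α + β - 1) := by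
    nth_rewrite 1 [← Real.rpow_one (x - t)]
    rw [← Real.rpow_add hc0, ← Real.rpow_add hc0]
    congr 1; ring
  rw [← mul_assoc, hpow]


lemma rl_main (a x α β : ℝ) (hax : a < x) (hα : 0 < α) (hβ : 0 < β)
    (f : ℝ → ℝ) (hf : Continuous f) :
    (∫ s in a..x, (x - s) ^ (β - 1) * ∫ t in a..s, (s - t) ^ (α - 1) * f t)
      = (∫ u in (0:ℝ)..1, u ^ (α - 1) * (1 - u) ^ (β - 1)) *
        ∫ t in a..x, (x - t) ^ (α + β - 1) * f t := by
  obtain ⟨M, hM⟩ := isCompact_Icc.exists_bound_of_continuousOn (f := f) hf.continuousOn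
  have hM0 : 0 ≤ M := le_trans (norm_nonneg (f a)) (hM a ⟨le_rfl, hax.le⟩)
  set μ := volume.restrict (Set.Ioc a x) with hμ
  set g : ℝ → ℝ := fun y => if 0 < y then Real.exp (Real.log y * (α - 1)) else 0 with hg_def
  set h : ℝ → ℝ := fun s => if s < x then Real.exp (Real.log (x - s) * (β - 1)) else 0 with hh_def
  set F : ℝ × ℝ → ℝ := fun p => h p.1 * (g (p.1 - p.2) * f p.2) with hF_def
  have hg_eq : ∀ y : ℝ, 0 < y → g y = y ^ (α - 1) := fun y hy => by
    rw [hg_def]; simp only [if_pos hy]; rw [Real.rpow_def_of_pos hy]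
  have hg_zero : ∀ y : ℝ, y ≤ 0 → g y = 0 := fun y hy => by
    rw [hg_def]; simp only [if_neg (not_lt.mpr hy)]
  have hh_eq : ∀ s : ℝ, s < x → h s = (x - s) ^ (β - 1) := fun s hs => by
    rw [hh_def]; simp only [if_pos hs]; rw [Real.rpow_def_of_pos (by linarith)]
  have hh_nonneg : ∀ s : ℝ, 0 ≤ h s := fun s => by
    rw [hh_def]; dsimp only; split
    · exact (Real.exp_pos _).le
    · exact le_rfl
  have hgm : Measurable g :=
    Measurable.ite (measurableSet_lt measurable_const measurable_id)
      (Real.measurable_exp.comp (Real.measurable_log.mul_const _)) measurable_const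
  have hhm : Measurable h :=
    Measurable.ite (measurableSet_lt measurable_id measurable_const)
      (Real.measurable_exp.comp
        ((Real.measurable_log.comp (measurable_const.sub measurable_id)).mul_const _))
      measurable_const
  have hFm : Measurable F :=
    (hhm.comp measurable_fst).mul ((hgm.comp (measurable_fst.sub measurable_snd)).mul
      (hf.measurable.comp measurable_snd))
  have hrint : ∀ s : ℝ, IntervalIntegrable (fun t => (s - t) ^ (α - 1)) volume a s := by
    intro s
    have := (intervalIntegrable_rpow' (show (-1:ℝ) < α - 1 by linarith)
      (a := s - a) (b := s - s)).comp_sub_left s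
    simpa using this
  have hF_ind_t : ∀ s t : ℝ, F (s, t)
      = Set.indicator (Set.Iio s) (fun t => h s * ((s - t) ^ (α - 1) * f t)) t := by
    intro s t
    by_cases ht : t < s
    · rw [Set.indicator_of_mem (Set.mem_Iio.mpr ht), hF_def]; dsimp only
      rw [hg_eq _ (by linarith)]
    · rw [Set.indicator_of_notMem (by simpa using ht), hF_def]; dsimp only
      rw [hg_zero _ (by linarith [not_lt.mp ht])]; ring
  have hF_ind_s : ∀ s t : ℝ, F (s, t)
      = Set.indicator (Set.Ioi t) (fun s => h s * ((s - t) ^ (α - 1) * f t)) s := by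
    intro s t
    by_cases ht : t < s
    · rw [Set.indicator_of_mem (Set.mem_Ioi.mpr ht), hF_def]; dsimp only
      rw [hg_eq _ (by linarith)]
    · rw [Set.indicator_of_notMem (by simpa using ht), hF_def]; dsimp only
      rw [hg_zero _ (by linarith [not_lt.mp ht])]; ring
  -- integrability in t for fixed s
  have hker_int : ∀ s ∈ Set.Ioc a x, ∀ c : ℝ,
      IntegrableOn (fun t => h s * ((s - t) ^ (α - 1) * c * f t)) (Set.Iio s) μ := by
    intro s hs c
    have h1 : IntervalIntegrable (fun t => h s * ((s - t) ^ (α - 1) * c * f t)) volume a s :=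
      ((((hrint s).mul_const c).mul_continuousOn hf.continuousOn).const_mul (h s))
    have h2 : IntegrableOn (fun t => h s * ((s - t) ^ (α - 1) * c * f t)) (Set.Ioc a s) volume :=
      (intervalIntegrable_iff_integrableOn_Ioc_of_le hs.1.le).mp h1
    rw [IntegrableOn, hμ, Measure.restrict_restrict measurableSet_Iio]
    exact h2.mono_set fun y hy => ⟨hy.2.1, hy.1.le⟩
  have hint_t : ∀ s ∈ Set.Ioc a x, Integrable (fun t => F (s, t)) μ := by
    intro s hs
    have heq : (fun t => F (s, t))
        = Set.indicator (Set.Iio s) (fun t => h s * ((s - t) ^ (α - 1) * f t)) :=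
      funext (hF_ind_t s)
    rw [heq, integrable_indicator_iff measurableSet_Iio]
    have := hker_int s hs 1
    simpa using this
  -- exact value of the rpow integral
  have hval : ∀ s : ℝ, a ≤ s → (∫ t in a..s, (s - t) ^ (α - 1)) = (s - a) ^ α / α := by
    intro s hs
    rw [intervalIntegral.integral_comp_sub_left (fun u => u ^ (α - 1)) s, sub_self,
      integral_rpow (Or.inl (by linarith))]
    have hα1 : α - 1 + 1 = α := by ring
    rw [hα1, Real.zero_rpow hα.ne']
    ring
  have hβint : IntervalIntegrable (fun s => (x - s) ^ (β - 1)) volume a x := by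
    have := (intervalIntegrable_rpow' (show (-1:ℝ) < β - 1 by linarith)
      (a := x - a) (b := x - x)).comp_sub_left x
    simpa using this
  have hh_ae : (fun s => (x - s) ^ (β - 1)) =ᵐ[μ] h := by
    have hx_ae : ∀ᵐ s : ℝ ∂volume, s ≠ x := by
      have hset : {s : ℝ | ¬ s ≠ x} = {x} := by ext s; simp
      rw [ae_iff, hset]
      exact measure_singleton x
    rw [Filter.EventuallyEq, hμ, ae_restrict_iff' measurableSet_Ioc]
    filter_upwards [hx_ae] with s hsx hmem
    rw [hh_eq s (lt_of_le_of_ne hmem.2 hsx)]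
  have hh_int : Integrable h μ :=
    (((intervalIntegrable_iff_integrableOn_Ioc_of_le hax.le).mp hβint)).congr hh_ae
  -- pointwise norm bound and iterated-norm integrability
  have hbound : ∀ s ∈ Set.Ioc a x,
      (∫ t, ‖F (s, t)‖ ∂μ) ≤ (M * ((x - a) ^ α / α)) * h s := by
    intro s hs
    have hbd_int : IntegrableOn (fun t => h s * ((s - t) ^ (α - 1) * M)) (Set.Iio s) μ := by
      have h1 : IntervalIntegrable (fun t => h s * ((s - t) ^ (α - 1) * M)) volume a s :=
        (((hrint s).mul_const M).const_mul (h s))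
      have h2 := (intervalIntegrable_iff_integrableOn_Ioc_of_le hs.1.le).mp h1
      rw [IntegrableOn, hμ, Measure.restrict_restrict measurableSet_Iio]
      exact h2.mono_set fun y hy => ⟨hy.2.1, hy.1.le⟩
    have hle : ∀ᵐ t ∂μ, ‖F (s, t)‖
        ≤ Set.indicator (Set.Iio s) (fun t => h s * ((s - t) ^ (α - 1) * M)) t := by
      rw [hμ, ae_restrict_iff' measurableSet_Ioc]
      refine Filter.Eventually.of_forall fun t hmem => ?_
      by_cases ht : t < s
      · rw [Set.indicator_of_mem (Set.mem_Iio.mpr ht), hF_ind_t s t,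
          Set.indicator_of_mem (Set.mem_Iio.mpr ht)]
        rw [Real.norm_eq_abs, abs_mul, abs_of_nonneg (hh_nonneg s), abs_mul,
          abs_of_nonneg (Real.rpow_nonneg (by linarith : (0:ℝ) ≤ s - t) _)]
        have hfM : |f t| ≤ M := by
          have := hM t ⟨hmem.1.le, hmem.2⟩; rwa [Real.norm_eq_abs] at this
        exact mul_le_mul_of_nonneg_left
          (mul_le_mul_of_nonneg_left hfM (Real.rpow_nonneg (by linarith) _)) (hh_nonneg s)
      · rw [Set.indicator_of_notMem (by simpa using ht), hF_ind_t s t,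
          Set.indicator_of_notMem (by simpa using ht)]
        simp
    have step1 : (∫ t, ‖F (s, t)‖ ∂μ)
        ≤ ∫ t, Set.indicator (Set.Iio s) (fun t => h s * ((s - t) ^ (α - 1) * M)) t ∂μ :=
      integral_mono_ae (hint_t s hs).norm
        ((integrable_indicator_iff measurableSet_Iio).mpr hbd_int) hle
    have hrOn : IntegrableOn (fun t => (s - t) ^ (α - 1)) (Set.Ioc a s) volume :=
      (intervalIntegrable_iff_integrableOn_Ioc_of_le hs.1.le).mp (hrint s)
    have hsub : Set.Iio s ∩ Set.Ioc a x ⊆ Set.Ioc a s := fun y hy => ⟨hy.2.1, hy.1.le⟩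
    have hIle : (∫ t in Set.Iio s ∩ Set.Ioc a x, (s - t) ^ (α - 1))
        ≤ (x - a) ^ α / α := by
      calc (∫ t in Set.Iio s ∩ Set.Ioc a x, (s - t) ^ (α - 1))
          ≤ ∫ t in Set.Ioc a s, (s - t) ^ (α - 1) := by
            refine setIntegral_mono_set hrOn ?_ (HasSubset.Subset.eventuallyLE hsub)
            filter_upwards [ae_restrict_mem measurableSet_Ioc] with t htm
            exact Real.rpow_nonneg (by linarith [htm.2]) _
        _ = (s - a) ^ α / α := by
            rw [← intervalIntegral.integral_of_le hs.1.le]; exact hval s hs.1.le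
        _ ≤ (x - a) ^ α / α := by
            have := Real.rpow_le_rpow (by linarith [hs.1] : (0:ℝ) ≤ s - a)
              (by linarith [hs.2] : s - a ≤ x - a) hα.le
            exact div_le_div_of_nonneg_right this hα.le  -- check name
    have step2 : (∫ t, Set.indicator (Set.Iio s)
          (fun t => h s * ((s - t) ^ (α - 1) * M)) t ∂μ)
        = h s * ((∫ t in Set.Iio s ∩ Set.Ioc a x, (s - t) ^ (α - 1)) * M) := by
      rw [MeasureTheory.integral_indicator measurableSet_Iio, hμ,
        Measure.restrict_restrict measurableSet_Iio, MeasureTheory.integral_const_mul]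
      congr 1
      rw [MeasureTheory.integral_mul_const]
    calc (∫ t, ‖F (s, t)‖ ∂μ)
        ≤ h s * ((∫ t in Set.Iio s ∩ Set.Ioc a x, (s - t) ^ (α - 1)) * M) := by
          rw [← step2]; exact step1
      _ ≤ h s * (((x - a) ^ α / α) * M) :=
          mul_le_mul_of_nonneg_left (mul_le_mul_of_nonneg_right hIle hM0) (hh_nonneg s)
      _ = (M * ((x - a) ^ α / α)) * h s := by ring
  have hφint : Integrable (fun s => ∫ t, ‖F (s, t)‖ ∂μ) μ := by
    refine Integrable.mono' (hh_int.const_mul (M * ((x - a) ^ α / α)))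
      ((hFm.norm.stronglyMeasurable.integral_prod_right').aestronglyMeasurable) ?_
    rw [hμ, ae_restrict_iff' measurableSet_Ioc]
    refine Filter.Eventually.of_forall fun s hs => ?_
    rw [Real.norm_eq_abs, abs_of_nonneg (integral_nonneg fun t => norm_nonneg _)]
    exact hbound s hs
  have hFint : Integrable F (μ.prod μ) := by
    refine (integrable_prod_iff hFm.aestronglyMeasurable).mpr ⟨?_, hφint⟩
    rw [hμ, ae_restrict_iff' measurableSet_Ioc]
    exact Filter.Eventually.of_forall fun s hs => hint_t s hs
  have hswap : (∫ s, (∫ t, F (s, t) ∂μ) ∂μ) = ∫ t, (∫ s, F (s, t) ∂μ) ∂μ :=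
    MeasureTheory.integral_integral_swap (f := fun s t => F (s, t)) hFint
  have hIocIoo : ∀ s : ℝ, s ≤ x → Set.Iio s ∩ Set.Ioc a x = Set.Ioo a s := by
    intro s hsx; ext t
    simp only [Set.mem_inter_iff, Set.mem_Iio, Set.mem_Ioc, Set.mem_Ioo]
    constructor
    · rintro ⟨h1, h2, h3⟩; exact ⟨h2, h1⟩
    · rintro ⟨h1, h2⟩; exact ⟨h2, h1, by linarith⟩
  have hIoiIoc : ∀ t : ℝ, a < t → Set.Ioi t ∩ Set.Ioc a x = Set.Ioc t x := by
    intro t hat; ext s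
    simp only [Set.mem_inter_iff, Set.mem_Ioi, Set.mem_Ioc]
    constructor
    · rintro ⟨h1, h2, h3⟩; exact ⟨h1, h3⟩
    · rintro ⟨h1, h2⟩; exact ⟨h1, by linarith, h2⟩
  have hleft : ∀ s ∈ Set.Ioo a x,
      (x - s) ^ (β - 1) * ∫ t in a..s, (s - t) ^ (α - 1) * f t = ∫ t, F (s, t) ∂μ := by
    intro s hs
    have : (∫ t, F (s, t) ∂μ)
        = ∫ t in a..s, h s * ((s - t) ^ (α - 1) * f t) := by
      calc (∫ t, F (s, t) ∂μ)
          = ∫ t, Set.indicator (Set.Iio s) (fun t => h s * ((s - t) ^ (α - 1) * f t)) t ∂μ := by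
            simp only [hF_ind_t]
        _ = ∫ t in Set.Iio s, h s * ((s - t) ^ (α - 1) * f t) ∂μ :=
            MeasureTheory.integral_indicator measurableSet_Iio
        _ = ∫ t in Set.Ioo a s, h s * ((s - t) ^ (α - 1) * f t) := by
            rw [hμ, Measure.restrict_restrict measurableSet_Iio, hIocIoo s hs.2.le]
        _ = ∫ t in Set.Ioc a s, h s * ((s - t) ^ (α - 1) * f t) :=
            (integral_Ioc_eq_integral_Ioo).symm
        _ = ∫ t in a..s, h s * ((s - t) ^ (α - 1) * f t) :=
            (intervalIntegral.integral_of_le hs.1.le).symm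
    rw [this, intervalIntegral.integral_const_mul, hh_eq s hs.2]
  have hright : ∀ t ∈ Set.Ioo a x,
      (∫ s, F (s, t) ∂μ)
        = (∫ u in (0:ℝ)..1, u ^ (α - 1) * (1 - u) ^ (β - 1))
            * ((x - t) ^ (α + β - 1) * f t) := by
    intro t ht
    have : (∫ s, F (s, t) ∂μ)
        = ∫ s in t..x, (x - s) ^ (β - 1) * (s - t) ^ (α - 1) * f t := by
      calc (∫ s, F (s, t) ∂μ)
          = ∫ s, Set.indicator (Set.Ioi t) (fun s => h s * ((s - t) ^ (α - 1) * f t)) s ∂μ := by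
            simp only [hF_ind_s]
        _ = ∫ s in Set.Ioi t, h s * ((s - t) ^ (α - 1) * f t) ∂μ :=
            MeasureTheory.integral_indicator measurableSet_Ioi
        _ = ∫ s in Set.Ioc t x, h s * ((s - t) ^ (α - 1) * f t) := by
            rw [hμ, Measure.restrict_restrict measurableSet_Ioi, hIoiIoc t ht.1]
        _ = ∫ s in Set.Ioo t x, h s * ((s - t) ^ (α - 1) * f t) :=
            integral_Ioc_eq_integral_Ioo
        _ = ∫ s in Set.Ioo t x, (x - s) ^ (β - 1) * (s - t) ^ (α - 1) * f t := by
            refine setIntegral_congr_fun measurableSet_Ioo fun s hsm => ?_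
            rw [hh_eq s hsm.2]; ring
        _ = ∫ s in Set.Ioc t x, (x - s) ^ (β - 1) * (s - t) ^ (α - 1) * f t :=
            (integral_Ioc_eq_integral_Ioo).symm
        _ = ∫ s in t..x, (x - s) ^ (β - 1) * (s - t) ^ (α - 1) * f t :=
            (intervalIntegral.integral_of_le ht.2.le).symm
    rw [this, intervalIntegral.integral_mul_const, inner_kernel α β t x hα hβ ht.2]
    ring
  calc (∫ s in a..x, (x - s) ^ (β - 1) * ∫ t in a..s, (s - t) ^ (α - 1) * f t)
      = ∫ s in Set.Ioc a x, (x - s) ^ (β - 1) * ∫ t in a..s, (s - t) ^ (α - 1) * f t :=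
        intervalIntegral.integral_of_le hax.le
    _ = ∫ s in Set.Ioo a x, (x - s) ^ (β - 1) * ∫ t in a..s, (s - t) ^ (α - 1) * f t :=
        integral_Ioc_eq_integral_Ioo
    _ = ∫ s in Set.Ioo a x, ∫ t, F (s, t) ∂μ :=
        setIntegral_congr_fun measurableSet_Ioo hleft
    _ = ∫ s, (∫ t, F (s, t) ∂μ) ∂μ := by
        rw [hμ]; exact (integral_Ioc_eq_integral_Ioo).symm
    _ = ∫ t, (∫ s, F (s, t) ∂μ) ∂μ := hswap
    _ = ∫ t in Set.Ioo a x, (∫ s, F (s, t) ∂μ) := by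
        rw [hμ]; exact integral_Ioc_eq_integral_Ioo
    _ = ∫ t in Set.Ioo a x, (∫ u in (0:ℝ)..1, u ^ (α - 1) * (1 - u) ^ (β - 1))
          * ((x - t) ^ (α + β - 1) * f t) :=
        setIntegral_congr_fun measurableSet_Ioo hright
    _ = ∫ t in Set.Ioc a x, (∫ u in (0:ℝ)..1, u ^ (α - 1) * (1 - u) ^ (β - 1))
          * ((x - t) ^ (α + β - 1) * f t) :=
        (integral_Ioc_eq_integral_Ioo).symm
    _ = ∫ t in a..x, (∫ u in (0:ℝ)..1, u ^ (α - 1) * (1 - u) ^ (β - 1))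
          * ((x - t) ^ (α + β - 1) * f t) :=
        (intervalIntegral.integral_of_le hax.le).symm
    _ = (∫ u in (0:ℝ)..1, u ^ (α - 1) * (1 - u) ^ (β - 1))
          * ∫ t in a..x, (x - t) ^ (α + β - 1) * f t :=
        intervalIntegral.integral_const_mul _ _

theorem riemann_liouville_semigroup
    (a x α β : ℝ) (hax : a < x) (hα : 0 < α) (hβ : 0 < β)
    (f : ℝ → ℝ) (hf : ContinuousOn f (Set.Icc a x)) :
    (1 / Real.Gamma β) * (∫ s in a..x, (x - s) ^ (β - 1) *
        ((1 / Real.Gamma α) * ∫ t in a..s, (s - t) ^ (α - 1) * f t)) =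
      (1 / Real.Gamma (α + β)) * ∫ t in a..x, (x - t) ^ (α + β - 1) * f t := by
  set g : ℝ → ℝ := Set.IccExtend hax.le ((Set.Icc a x).restrict f) with hgdef
  have hgc : Continuous g := (ContinuousOn.restrict hf).Icc_extend'
  have hgeq : ∀ t ∈ Set.Icc a x, g t = f t := fun t ht => by
    rw [hgdef, Set.IccExtend_of_mem _ _ ht]; rfl
  have hinner : ∀ s ∈ Set.uIcc a x,
      (∫ t in a..s, (s - t) ^ (α - 1) * f t) = ∫ t in a..s, (s - t) ^ (α - 1) * g t := by
    intro s hs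
    rw [Set.uIcc_of_le hax.le] at hs
    refine intervalIntegral.integral_congr fun t htm => ?_
    rw [Set.uIcc_of_le hs.1] at htm
    rw [hgeq t ⟨htm.1, le_trans htm.2 hs.2⟩]
  have h1 : (∫ s in a..x, (x - s) ^ (β - 1) *
        ((1 / Real.Gamma α) * ∫ t in a..s, (s - t) ^ (α - 1) * f t))
      = (1 / Real.Gamma α) *
        ∫ s in a..x, (x - s) ^ (β - 1) * ∫ t in a..s, (s - t) ^ (α - 1) * g t := by
    rw [← intervalIntegral.integral_const_mul]
    refine intervalIntegral.integral_congr fun s hs => ?_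
    rw [← hinner s hs]
    ring
  have h2 : (∫ t in a..x, (x - t) ^ (α + β - 1) * f t)
      = ∫ t in a..x, (x - t) ^ (α + β - 1) * g t := by
    refine intervalIntegral.integral_congr fun t ht => ?_
    rw [Set.uIcc_of_le hax.le] at ht
    rw [hgeq t ht]
  rw [h1, rl_main a x α β hax hα hβ g hgc, h2, real_beta α β hα hβ]
  have hA := Real.Gamma_pos_of_pos hα
  have hB := Real.Gamma_pos_of_pos hβ
  have hAB := Real.Gamma_pos_of_pos (show 0 < α + β by linarith)
  field_simp
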